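/- (Greedy can be arbitrarily bad for linear regression R².) Fix 0 < z < 1/2 and, in ℝ³, let y = (1,0,0), x₁ = (0,1,0), x₂ = (z, √(1−z²), 0), x₃ = (2z, 0, √(1−4z²)). Then: (i) the squared norm of the orthogonal projection of y onto the span of {x₂, x₃} equals (5z² − 8z⁴)/(1 − 4z⁴), which tends to 0 as z → 0⁺; and (ii) y = −(√(1−z²)/z)·x₁ + (1/z)·x₂, so the orthogonal projection of y onto the span of {x₁, x₂} is y itself (the corresponding R² equals 1). Moreover the greedy first step picks x₃, since ⟨y,x₁⟩² = 0, ⟨y,x₂⟩² = z², and ⟨y,x₃⟩² = 4z². -/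

import Mathlib

open Real

set_option maxHeartbeats 1000000

noncomputable section

/-- greedy can be arbitrarily bad for linear regression `R²`. -/
theorem greedy_bad_for_R2
    (z : ℝ) (hz0 : 0 < z) (hz : z < 1 / 2)
    (y x1 x2 x3 : EuclideanSpace ℝ (Fin 3))
    (hy : y = WithLp.toLp 2 ![1, 0, 0]) (hx1 : x1 = WithLp.toLp 2 ![0, 1, 0])
    (hx2 : x2 = WithLp.toLp 2 ![z, Real.sqrt (1 - z ^ 2), 0])
    (hx3 : x3 = WithLp.toLp 2 ![2 * z, 0, Real.sqrt (1 - 4 * z ^ 2)]) :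
    ‖(Submodule.orthogonalProjection (Submodule.span ℝ {x2, x3}) y : EuclideanSpace ℝ (Fin 3))‖ ^ 2
        = (5 * z ^ 2 - 8 * z ^ 4) / (1 - 4 * z ^ 4) ∧
      Filter.Tendsto (fun w : ℝ => (5 * w ^ 2 - 8 * w ^ 4) / (1 - 4 * w ^ 4))
        (nhdsWithin 0 (Set.Ioi 0)) (nhds 0) ∧
      y = (-(Real.sqrt (1 - z ^ 2) / z)) • x1 + (1 / z) • x2 ∧
      (Submodule.orthogonalProjection (Submodule.span ℝ {x1, x2}) y : EuclideanSpace ℝ (Fin 3)) = y ∧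
      (inner ℝ y x1 : ℝ) ^ 2 = 0 ∧ (inner ℝ y x2 : ℝ) ^ 2 = z ^ 2 ∧
      (inner ℝ y x3 : ℝ) ^ 2 = 4 * z ^ 2 := by
  have hzne : z ≠ 0 := ne_of_gt hz0
  have h1z2 : (0:ℝ) ≤ 1 - z ^ 2 := by nlinarith
  have h14z2 : (0:ℝ) ≤ 1 - 4 * z ^ 2 := by nlinarith
  set s := Real.sqrt (1 - z ^ 2) with hs
  set t := Real.sqrt (1 - 4 * z ^ 2) with ht
  have hs2 : s ^ 2 = 1 - z ^ 2 := Real.sq_sqrt h1z2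
  have ht2 : t ^ 2 = 1 - 4 * z ^ 2 := Real.sq_sqrt h14z2
  have hden : (1:ℝ) - 4 * z ^ 4 ≠ 0 := by nlinarith
  have hden' : (1:ℝ) - z ^ 4 * 4 ≠ 0 := by contrapose! hden; linarith
  -- the linear combination identity
  have hcomb : y = (-(s / z)) • x1 + (1 / z) • x2 := by
    subst hy hx1 hx2
    ext i
    fin_cases i <;>
      simp [PiLp.add_apply, PiLp.smul_apply, smul_eq_mul] <;> field_simp <;> ring
  -- projection onto span {x1, x2} is y
  have hmem12 : y ∈ Submodule.span ℝ ({x1, x2} : Set (EuclideanSpace ℝ (Fin 3))) := by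
    rw [Submodule.mem_span_pair]
    exact ⟨-(s / z), 1 / z, hcomb.symm⟩
  -- inner products
  have hinner1 : (inner ℝ y x1 : ℝ) = 0 := by
    subst hy hx1
    simp [PiLp.inner_apply, Fin.sum_univ_three]
  have hinner2 : (inner ℝ y x2 : ℝ) = z := by
    subst hy hx2
    simp [PiLp.inner_apply, Fin.sum_univ_three]
  have hinner3 : (inner ℝ y x3 : ℝ) = 2 * z := by
    subst hy hx3
    simp [PiLp.inner_apply, Fin.sum_univ_three]
  -- projection onto span {x2, x3}
  set a := (z - 4 * z ^ 3) / (1 - 4 * z ^ 4) with ha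
  set b := (2 * z - 2 * z ^ 3) / (1 - 4 * z ^ 4) with hb
  set p : EuclideanSpace ℝ (Fin 3) := a • x2 + b • x3 with hp
  have hpmem : p ∈ Submodule.span ℝ ({x2, x3} : Set (EuclideanSpace ℝ (Fin 3))) := by
    rw [Submodule.mem_span_pair]; exact ⟨a, b, rfl⟩
  have h22 : (inner ℝ x2 x2 : ℝ) = 1 := by
    subst hx2
    rw [PiLp.inner_apply]; simp [PiLp.inner_apply, Fin.sum_univ_three]
    nlinarith [hs2]
  have h33 : (inner ℝ x3 x3 : ℝ) = 1 := by
    subst hx3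
    rw [PiLp.inner_apply]; simp [PiLp.inner_apply, Fin.sum_univ_three]
    nlinarith [ht2]
  have h23 : (inner ℝ x2 x3 : ℝ) = 2 * z ^ 2 := by
    subst hx2 hx3
    simp [PiLp.inner_apply, Fin.sum_univ_three]
    ring
  have h32 : (inner ℝ x3 x2 : ℝ) = 2 * z ^ 2 := by rw [real_inner_comm]; exact h23
  have ho2 : (inner ℝ (y - p) x2 : ℝ) = 0 := by
    rw [inner_sub_left, hp, inner_add_left, real_inner_smul_left, real_inner_smul_left,
      hinner2, h22, h32, ha, hb]
    field_simp
    ring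
  have ho3 : (inner ℝ (y - p) x3 : ℝ) = 0 := by
    rw [inner_sub_left, hp, inner_add_left, real_inner_smul_left, real_inner_smul_left,
      hinner3, h33, h23, ha, hb]
    field_simp
    ring
  have hproj : (Submodule.orthogonalProjection (Submodule.span ℝ {x2, x3}) y :
      EuclideanSpace ℝ (Fin 3)) = p := by
    refine Submodule.eq_starProjection_of_mem_of_inner_eq_zero hpmem ?_
    intro w hw
    rw [Submodule.mem_span_pair] at hw
    obtain ⟨c, d, rfl⟩ := hw
    rw [inner_add_right, real_inner_smul_right, real_inner_smul_right, ho2, ho3]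
    ring
  refine ⟨?_, ?_, hcomb, Submodule.starProjection_eq_self_iff.mpr hmem12,
    by rw [hinner1]; ring, by rw [hinner2], by rw [hinner3]; ring⟩
  · rw [hproj]
    have : ‖p‖ ^ 2 = (inner ℝ p p : ℝ) := (real_inner_self_eq_norm_sq p).symm
    rw [this, hp]
    simp only [inner_add_left, inner_add_right, real_inner_smul_left, real_inner_smul_right,
      h22, h33, h23, h32]
    rw [ha, hb]
    field_simp
    ring
  · have hc : ContinuousAt (fun w : ℝ => (5 * w ^ 2 - 8 * w ^ 4) / (1 - 4 * w ^ 4)) 0 :=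
      ContinuousAt.div (by fun_prop) (by fun_prop) (by norm_num)
    have := hc.tendsto
    simp only [show (5 * (0:ℝ) ^ 2 - 8 * 0 ^ 4) / (1 - 4 * 0 ^ 4) = 0 by norm_num] at this
    exact this.mono_left nhdsWithin_le_nhds
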